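/- Majority decoding lemma: Let 𝓢' be a finite collection of subsets of [n] such that any two distinct S₁,S₂ ∈ 𝓢' satisfy |S₁ ∩ S₂| ≤ ρn. Let {f_S}_{S∈𝓢'} be functions f_S : S → {0,1} such that for a uniformly random pair S₁,S₂ from 𝓢' (independently), Pr[disagr(f_{S₁},f_{S₂}) ≤ ζn] ≥ 1-κ. Define g:[n]→{0,1} by g(x) = majority of f_S(x) over those S ∈ 𝓢' containing x. Then E_{S∈𝓢'}[disagr(g, f_S)] ≤ n·√(ρκ + ζ). -/
import Mathlib


open Finset

/-- The pointwise-majority function of a collection of local functions `f S : S → Bool`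
(values of `f S` outside `S` are ignored); ties are broken towards `true`. -/
def majFun {n : ℕ} (S' : Finset (Finset (Fin n))) (f : Finset (Fin n) → Fin n → Bool)
    (x : Fin n) : Bool :=
  decide ((S'.filter (fun S => x ∈ S ∧ f S x = false)).card
      ≤ (S'.filter (fun S => x ∈ S ∧ f S x = true)).card)

lemma bool_split (x y z : Bool) : (x ≠ y) ↔ (x ≠ z ∧ y = z) ∨ (x = z ∧ y ≠ z) := by
  revert x y z; decide

theorem stmt_3 (n : ℕ) (ρ ζ κ : ℝ) (hρ : 0 < ρ) (hζ : 0 < ζ) (hκ : 0 < κ)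
    (S' : Finset (Finset (Fin n))) (hne : S'.Nonempty)
    (f : Finset (Fin n) → Fin n → Bool)
    (hint : ∀ S₁ ∈ S', ∀ S₂ ∈ S', S₁ ≠ S₂ → ((S₁ ∩ S₂).card : ℝ) ≤ ρ * n)
    (hpr : (1 - κ) * ((S'.card : ℝ)) ^ 2
      ≤ (((S' ×ˢ S').filter (fun P =>
          (((P.1 ∩ P.2).filter (fun u => f P.1 u ≠ f P.2 u)).card : ℝ) ≤ ζ * n)).card : ℝ)) :
    (∑ S ∈ S', ((S.filter (fun u => majFun S' f u ≠ f S u)).card : ℝ))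
      ≤ (S'.card : ℝ) * ((n : ℝ) * Real.sqrt (ρ * κ + ζ)) := by
  classical
  set g := majFun S' f with hg
  set a : Fin n → ℕ := fun u => (S'.filter (fun S => u ∈ S ∧ f S u ≠ g u)).card with ha
  set b : Fin n → ℕ := fun u => (S'.filter (fun S => u ∈ S ∧ f S u = g u)).card with hb
  have hab : ∀ u, a u ≤ b u := by
    intro u
    by_cases h : (S'.filter (fun S => u ∈ S ∧ f S u = false)).card
        ≤ (S'.filter (fun S => u ∈ S ∧ f S u = true)).card
    · have hgu : g u = true := by simp [hg, majFun, h]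
      simp only [ha, hb, hgu]
      convert h using 2 <;> ext S <;> simp
    · have hgu : g u = false := by simp [hg, majFun, h]
      simp only [ha, hb, hgu]
      push_neg at h
      refine le_trans ?_ (le_trans h.le ?_) <;> apply le_of_eq <;> congr 1 <;>
        ext S <;> simp
  -- L = ∑ a
  have hL : (∑ S ∈ S', ((S.filter (fun u => g u ≠ f S u)).card : ℝ))
      = ∑ u : Fin n, (a u : ℝ) := by
    push_cast
    norm_cast
    have : ∀ S, (S.filter (fun u => g u ≠ f S u)).card
        = ∑ u : Fin n, if u ∈ S ∧ f S u ≠ g u then 1 else 0 := by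
      intro S
      rw [← Finset.card_filter]
      congr 1
      ext u; simp [and_comm, ne_comm]
    simp_rw [this, ha, Finset.card_filter]
    rw [Finset.sum_comm]
  -- pair count at u
  have hpair : ∀ u : Fin n,
      ((S' ×ˢ S').filter (fun P : Finset (Fin n) × Finset (Fin n) =>
        u ∈ P.1 ∧ u ∈ P.2 ∧ f P.1 u ≠ f P.2 u)).card = a u * b u + b u * a u := by
    intro u
    set A := S'.filter (fun S => u ∈ S ∧ f S u ≠ g u) with hA
    set B := S'.filter (fun S => u ∈ S ∧ f S u = g u) with hB
    have hunion : (S' ×ˢ S').filter (fun P : Finset (Fin n) × Finset (Fin n) =>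
        u ∈ P.1 ∧ u ∈ P.2 ∧ f P.1 u ≠ f P.2 u) = (A ×ˢ B) ∪ (B ×ˢ A) := by
      ext ⟨S₁, S₂⟩
      simp only [mem_filter, mem_product, mem_union, hA, hB]
      rw [bool_split (f S₁ u) (f S₂ u) (g u)]
      tauto
    have hdisj : Disjoint (A ×ˢ B) (B ×ˢ A) := by
      rw [Finset.disjoint_left]
      rintro ⟨S₁, S₂⟩ h1 h2
      simp only [mem_product, hA, hB, mem_filter] at h1 h2
      exact h1.1.2.2 h2.1.2.2
    rw [hunion, Finset.card_union_of_disjoint hdisj, Finset.card_product,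
      Finset.card_product, ha, hb]
  -- T = ∑ u pair counts
  have hT : (∑ P ∈ S' ×ˢ S', (((P.1 ∩ P.2).filter (fun u => f P.1 u ≠ f P.2 u)).card))
      = ∑ u : Fin n, (a u * b u + b u * a u) := by
    have : ∀ P : Finset (Fin n) × Finset (Fin n),
        ((P.1 ∩ P.2).filter (fun u => f P.1 u ≠ f P.2 u)).card
        = ∑ u : Fin n, if u ∈ P.1 ∧ u ∈ P.2 ∧ f P.1 u ≠ f P.2 u then 1 else 0 := by
      intro P
      rw [← Finset.card_filter]
      congr 1
      ext u; simp [and_assoc]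
    simp_rw [this]
    rw [Finset.sum_comm]
    congr 1
    ext u
    rw [← Finset.card_filter, hpair u]
  -- Step B : (∑ a)^2 ≤ n * T  (in ℝ)
  set L : ℝ := ∑ u : Fin n, (a u : ℝ) with hLa
  set T : ℝ := ∑ P ∈ S' ×ˢ S',
    (((P.1 ∩ P.2).filter (fun u => f P.1 u ≠ f P.2 u)).card : ℝ) with hTa
  have hTval : T = ∑ u : Fin n, ((a u : ℝ) * b u + (b u : ℝ) * a u) := by
    rw [hTa]
    exact_mod_cast hT
  have hB2 : L ^ 2 ≤ (n : ℝ) * T := by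
    have h1 : L ^ 2 ≤ (n : ℝ) * ∑ u : Fin n, (a u : ℝ) ^ 2 := by
      have := sq_sum_le_card_mul_sum_sq (s := (Finset.univ : Finset (Fin n)))
        (f := fun u => (a u : ℝ))
      simpa using this
    refine h1.trans (mul_le_mul_of_nonneg_left ?_ (by positivity))
    rw [hTval]
    apply Finset.sum_le_sum
    intro u _
    have hab' : (a u : ℝ) ≤ b u := by exact_mod_cast hab u
    nlinarith [Nat.cast_nonneg (α := ℝ) (a u), Nat.cast_nonneg (α := ℝ) (b u)]
  -- Step A : T ≤ (ρ*κ + ζ) * n * m^2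
  set m : ℝ := (S'.card : ℝ) with hm
  have hm0 : 0 < m := by
    rw [hm]; exact_mod_cast Finset.card_pos.mpr hne
  have hA2 : T ≤ (ρ * κ + ζ) * n * m ^ 2 := by
    set G := (S' ×ˢ S').filter (fun P : Finset (Fin n) × Finset (Fin n) =>
      (((P.1 ∩ P.2).filter (fun u => f P.1 u ≠ f P.2 u)).card : ℝ) ≤ ζ * n) with hG
    have hGsub : G ⊆ S' ×ˢ S' := Finset.filter_subset _ _
    have hsplit : T = (∑ P ∈ G, (((P.1 ∩ P.2).filter (fun u => f P.1 u ≠ f P.2 u)).card : ℝ))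
        + ∑ P ∈ (S' ×ˢ S') \ G, (((P.1 ∩ P.2).filter (fun u => f P.1 u ≠ f P.2 u)).card : ℝ) := by
      rw [hTa, ← Finset.sum_sdiff hGsub]; ring
    have hGcard : (G.card : ℝ) ≤ m ^ 2 := by
      have := Finset.card_le_card hGsub
      rw [hm]
      push_cast
      rw [← Nat.cast_pow]
      exact_mod_cast this.trans_eq (by rw [Finset.card_product]; ring)
    have hBad : (((S' ×ˢ S') \ G).card : ℝ) ≤ κ * m ^ 2 := by
      have hc : ((S' ×ˢ S') \ G).card = (S' ×ˢ S').card - G.card :=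
        Finset.card_sdiff_of_subset hGsub
      have hle : (G.card : ℝ) ≥ (1 - κ) * m ^ 2 := hpr
      have : ((S' ×ˢ S').card : ℝ) = m ^ 2 := by
        rw [Finset.card_product, hm]; push_cast; ring
      rw [hc, Nat.cast_sub (Finset.card_le_card hGsub), this]
      linarith
    have hgood : (∑ P ∈ G, (((P.1 ∩ P.2).filter (fun u => f P.1 u ≠ f P.2 u)).card : ℝ))
        ≤ (G.card : ℝ) * (ζ * n) := by
      calc (∑ P ∈ G, (((P.1 ∩ P.2).filter (fun u => f P.1 u ≠ f P.2 u)).card : ℝ))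
          ≤ ∑ P ∈ G, ζ * n := Finset.sum_le_sum (fun P hP => (Finset.mem_filter.mp hP).2)
        _ = (G.card : ℝ) * (ζ * n) := by rw [Finset.sum_const, nsmul_eq_mul]
    have hbad : (∑ P ∈ (S' ×ˢ S') \ G, (((P.1 ∩ P.2).filter
        (fun u => f P.1 u ≠ f P.2 u)).card : ℝ))
        ≤ (((S' ×ˢ S') \ G).card : ℝ) * (ρ * n) := by
      calc (∑ P ∈ (S' ×ˢ S') \ G, (((P.1 ∩ P.2).filter
            (fun u => f P.1 u ≠ f P.2 u)).card : ℝ))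
          ≤ ∑ P ∈ (S' ×ˢ S') \ G, ρ * n := by
            apply Finset.sum_le_sum
            intro P hP
            rw [Finset.mem_sdiff] at hP
            obtain ⟨hPmem, hPbad⟩ := hP
            rw [Finset.mem_product] at hPmem
            have hne12 : P.1 ≠ P.2 := by
              intro h
              apply hPbad
              rw [hG, Finset.mem_filter]
              refine ⟨by rw [Finset.mem_product]; exact hPmem, ?_⟩
              have : ((P.1 ∩ P.2).filter (fun u => f P.1 u ≠ f P.2 u)) = ∅ := by
                rw [Finset.filter_eq_empty_iff]
                intro u _
                simp [h]
              rw [this]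
              simp
              positivity
            calc (((P.1 ∩ P.2).filter (fun u => f P.1 u ≠ f P.2 u)).card : ℝ)
                ≤ ((P.1 ∩ P.2).card : ℝ) := by
                  exact_mod_cast Finset.card_le_card (Finset.filter_subset _ _)
              _ ≤ ρ * n := hint P.1 hPmem.1 P.2 hPmem.2 hne12
        _ = (((S' ×ˢ S') \ G).card : ℝ) * (ρ * n) := by rw [Finset.sum_const, nsmul_eq_mul]
    have hρn : (0 : ℝ) ≤ ρ * n := by positivity
    have hζn : (0 : ℝ) ≤ ζ * n := by positivity
    calc T ≤ (G.card : ℝ) * (ζ * n) + (((S' ×ˢ S') \ G).card : ℝ) * (ρ * n) := by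
          rw [hsplit]; exact add_le_add hgood hbad
      _ ≤ m ^ 2 * (ζ * n) + (κ * m ^ 2) * (ρ * n) :=
          add_le_add (mul_le_mul_of_nonneg_right hGcard hζn)
            (mul_le_mul_of_nonneg_right hBad hρn)
      _ = (ρ * κ + ζ) * n * m ^ 2 := by ring
  -- conclusion
  have hLnn : 0 ≤ L := Finset.sum_nonneg fun u _ => by positivity
  have hkey : L ^ 2 ≤ (ρ * κ + ζ) * ((n : ℝ) * m) ^ 2 := by
    calc L ^ 2 ≤ (n : ℝ) * T := hB2
      _ ≤ (n : ℝ) * ((ρ * κ + ζ) * n * m ^ 2) :=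
          mul_le_mul_of_nonneg_left hA2 (by positivity)
      _ = (ρ * κ + ζ) * ((n : ℝ) * m) ^ 2 := by ring
  have hfin : L ≤ m * ((n : ℝ) * Real.sqrt (ρ * κ + ζ)) := by
    have h1 : L ≤ Real.sqrt ((ρ * κ + ζ) * ((n : ℝ) * m) ^ 2) := by
      rw [← Real.sqrt_sq hLnn]
      exact Real.sqrt_le_sqrt hkey
    rwa [Real.sqrt_mul (by positivity) _, Real.sqrt_sq (by positivity),
      show Real.sqrt (ρ * κ + ζ) * ((n : ℝ) * m)
        = m * ((n : ℝ) * Real.sqrt (ρ * κ + ζ)) by ring] at h1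
  rw [hL]
  exact hfin
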